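/- Lemma 2 (per-block strong secrecy, conditional form): Fix k ∈ {1,2} with k̄ the other index, and let n be a power of 2. Let p denote the joint law of (A^n, T_{(1)}^n, T_{(2)}^n, Z^n). Write ℱ := H^{(n)}_{V|Z}, 𝒢 := H^{(n)}_{U_k|VZ}, ℬ := H^{(n)}_{U_k̄|V U_k Z}. Let (Ã^n, T̃_{(1)}^n, T̃_{(2)}^n, Z̃^n) be any random tuple taking values in the same spaces (law q̃) such that H_{q̃}( Ã[ℱ], T̃_{(k)}[𝒢], T̃_{(k̄)}[ℬ] | Z̃^n ) ≥ H_p( A[ℱ], T_{(k)}[𝒢], T_{(k̄)}[ℬ] | Z^n ) − ε for some ε ≥ 0. Then the information leaked to the eavesdropper satisfies I_{q̃}( Ã[ℱ], T̃_{(k)}[𝒢], T̃_{(k̄)}[ℬ] ; Z̃^n ) ≤ 3 n δ_n + ε. -/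

import Mathlib

open scoped BigOperators

noncomputable section

namespace WTpaper

/-- A probability mass function on a finite type. -/
def IsPMF {Ω : Type*} [Fintype Ω] (μ : Ω → ℝ) : Prop :=
  (∀ ω, 0 ≤ μ ω) ∧ ∑ ω, μ ω = 1

/-- `Finset.filter` over the whole type, with classical decidability. -/
def cfilter {α : Type*} [Fintype α] (p : α → Prop) : Finset α :=
  @Finset.filter α p (Classical.decPred p) Finset.univ

/-- Probability of an event. -/
def prob {Ω : Type*} [Fintype Ω] (μ : Ω → ℝ) (p : Ω → Prop) : ℝ :=
  ∑ ω ∈ cfilter p, μ ω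

/-- Probability that a random variable takes a given value. -/
def probOf {Ω α : Type*} [Fintype Ω] (μ : Ω → ℝ) (X : Ω → α) (x : α) : ℝ :=
  prob μ (fun ω => X ω = x)

/-- Shannon entropy (in bits) of a random variable on a finite probability space. -/
def ent {Ω α : Type*} [Fintype Ω] [Fintype α] (μ : Ω → ℝ) (X : Ω → α) : ℝ :=
  -∑ x : α, probOf μ X x * Real.logb 2 (probOf μ X x)

/-- Conditional Shannon entropy `H(X | Y)` (in bits). -/
def condEnt {Ω α β : Type*} [Fintype Ω] [Fintype α] [Fintype β]
    (μ : Ω → ℝ) (X : Ω → α) (Y : Ω → β) : ℝ :=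
  ent μ (fun ω => (X ω, Y ω)) - ent μ Y

/-- Mutual information `I(X ; Y)` (in bits). -/
def mutInfo {Ω α β : Type*} [Fintype Ω] [Fintype α] [Fintype β]
    (μ : Ω → ℝ) (X : Ω → α) (Y : Ω → β) : ℝ :=
  ent μ X + ent μ Y - ent μ (fun ω => (X ω, Y ω))

/-- Conditional mutual information `I(X ; Y | Z)` (in bits). -/
def condMutInfo {Ω α β γ : Type*} [Fintype Ω] [Fintype α] [Fintype β] [Fintype γ]
    (μ : Ω → ℝ) (X : Ω → α) (Y : Ω → β) (Z : Ω → γ) : ℝ :=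
  condEnt μ X Z - condEnt μ X (fun ω => (Y ω, Z ω))

/-- The Markov chain `A − B − C`: `P(A,B,C) P(B) = P(A,B) P(B,C)`. -/
def MarkovChain {Ω α β γ : Type*} [Fintype Ω] (μ : Ω → ℝ)
    (A : Ω → α) (B : Ω → β) (C : Ω → γ) : Prop :=
  ∀ a b c,
    probOf μ (fun ω => (A ω, B ω, C ω)) (a, b, c) * probOf μ B b =
      probOf μ (fun ω => (A ω, B ω)) (a, b) * probOf μ (fun ω => (B ω, C ω)) (b, c)

/-- `δ_n = 2^{-n^β}`. -/
def deltaN (β : ℝ) (n : ℕ) : ℝ := (2 : ℝ) ^ (-((n : ℝ) ^ β))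

/-- Arıkan's polarization kernel. -/
def g2 : Matrix (Fin 2) (Fin 2) (ZMod 2) := !![1, 1; 1, 0]

def twoPowEquiv (m : ℕ) : Fin 2 × Fin (2 ^ m) ≃ Fin (2 ^ (m + 1)) :=
  finProdFinEquiv.trans (finCongr (by rw [pow_succ]; exact Nat.mul_comm 2 (2 ^ m)))

/-- The source polarization matrix `G_n = [[1,1],[1,0]]^{⊗ m}`, with `n = 2^m`. -/
def polarG : (m : ℕ) → Matrix (Fin (2 ^ m)) (Fin (2 ^ m)) (ZMod 2)
  | 0 => 1
  | m + 1 =>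
      Matrix.reindex (twoPowEquiv m) (twoPowEquiv m)
        (Matrix.kroneckerMap (· * ·) g2 (polarG m))

/-- The distribution of `n` i.i.d. copies of a source. -/
def iid {Ω : Type*} [Fintype Ω] (μ : Ω → ℝ) (n : ℕ) : (Fin n → Ω) → ℝ :=
  fun ω => ∏ i, μ (ω i)

/-- The polar transform `U^n = X^n G_n` of the `n` i.i.d. copies of `X`. -/
def polarVec {Ω : Type*} (X : Ω → ZMod 2) (m : ℕ) (ω : Fin (2 ^ m) → Ω) :
    Fin (2 ^ m) → ZMod 2 :=
  Matrix.vecMul (fun i => X (ω i)) (polarG m)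

/-- The prefix `U^{1:j-1}` of the polar transform. -/
def prefixVec {Ω : Type*} (X : Ω → ZMod 2) (m : ℕ) (j : Fin (2 ^ m))
    (ω : Fin (2 ^ m) → Ω) : Fin j.1 → ZMod 2 :=
  fun i => polarVec X m ω (Fin.castLE j.2.le i)

/-- `H^{(n)}_{X|S} = { j : H(U(j) | U^{1:j-1}, S^n) ≥ 1 - δ_n }`, where `n = 2^m`. -/
def highSet {Ω σ : Type*} [Fintype Ω] [Fintype σ] (μ : Ω → ℝ) (X : Ω → ZMod 2)
    (S : Ω → σ) (β : ℝ) (m : ℕ) : Finset (Fin (2 ^ m)) :=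
  cfilter fun j =>
    1 - deltaN β (2 ^ m) ≤
      condEnt (iid μ (2 ^ m)) (fun ω => polarVec X m ω j)
        (fun ω => (prefixVec X m j ω, fun i => S (ω i)))

/-- `L^{(n)}_{X|S} = { j : H(U(j) | U^{1:j-1}, S^n) ≤ δ_n }`, where `n = 2^m`. -/
def lowSet {Ω σ : Type*} [Fintype Ω] [Fintype σ] (μ : Ω → ℝ) (X : Ω → ZMod 2)
    (S : Ω → σ) (β : ℝ) (m : ℕ) : Finset (Fin (2 ^ m)) :=
  cfilter fun j =>
    condEnt (iid μ (2 ^ m)) (fun ω => polarVec X m ω j)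
        (fun ω => (prefixVec X m j ω, fun i => S (ω i))) ≤
      deltaN β (2 ^ m)

/-- `H^{(n)}_{X} = { j : H(U(j) | U^{1:j-1}) ≥ 1 - δ_n }` (no side information). -/
def highSet0 {Ω : Type*} [Fintype Ω] (μ : Ω → ℝ) (X : Ω → ZMod 2)
    (β : ℝ) (m : ℕ) : Finset (Fin (2 ^ m)) :=
  cfilter fun j =>
    1 - deltaN β (2 ^ m) ≤
      condEnt (iid μ (2 ^ m)) (fun ω => polarVec X m ω j) (prefixVec X m j)

/-- `L^{(n)}_{X} = { j : H(U(j) | U^{1:j-1}) ≤ δ_n }` (no side information). -/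
def lowSet0 {Ω : Type*} [Fintype Ω] (μ : Ω → ℝ) (X : Ω → ZMod 2)
    (β : ℝ) (m : ℕ) : Finset (Fin (2 ^ m)) :=
  cfilter fun j =>
    condEnt (iid μ (2 ^ m)) (fun ω => polarVec X m ω j) (prefixVec X m j) ≤
      deltaN β (2 ^ m)

/-- The subvector `X[𝒜]`. -/
def restr {n : ℕ} {γ : Type*} (A : Finset (Fin n)) (v : Fin n → γ) :
    {j // j ∈ A} → γ :=
  fun j => v j.1

/-- The triple of secured subvectors
`(A[H^{(n)}_{V|Z}], T_{(k)}[H^{(n)}_{U_k|VZ}], T_{(k̄)}[H^{(n)}_{U_k̄|V U_k Z}])`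
extracted from given realizations of the three polar-transformed layers.
`Ua` plays the role of `U_k` and `Ub` that of `U_k̄`. -/
def secTriple {Ω 𝒵 : Type*} [Fintype Ω] [Fintype 𝒵]
    (μ : Ω → ℝ) (V Ua Ub : Ω → ZMod 2) (Z : Ω → 𝒵) (β : ℝ) (m : ℕ)
    (a ta tb : Fin (2 ^ m) → ZMod 2) :=
  (restr (highSet μ V Z β m) a,
   restr (highSet μ Ua (fun ω => (V ω, Z ω)) β m) ta,
   restr (highSet μ Ub (fun ω => (V ω, Ua ω, Z ω)) β m) tb)



open Real Finset
open scoped Classical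

section Basics

variable {Ω α β γ : Type*} [Fintype Ω] (μ : Ω → ℝ)

lemma prob_eq_sum_ite (p : Ω → Prop) : prob μ p = ∑ ω, if p ω then μ ω else 0 := by
  rw [prob, cfilter, Finset.sum_filter]

lemma probOf_eq (X : Ω → α) (x : α) :
    probOf μ X x = ∑ ω, if X ω = x then μ ω else 0 := prob_eq_sum_ite μ _

lemma probOf_nonneg (hμ : ∀ ω, 0 ≤ μ ω) (X : Ω → α) (x : α) : 0 ≤ probOf μ X x := by
  rw [probOf_eq]
  exact Finset.sum_nonneg fun ω _ => by split <;> simp [hμ ω]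

lemma sum_probOf [Fintype α] (hμ : IsPMF μ) (X : Ω → α) : ∑ x, probOf μ X x = 1 := by
  classical
  simp only [probOf_eq]
  rw [Finset.sum_comm]
  rw [← hμ.2]
  refine Finset.sum_congr rfl fun ω _ => ?_
  simp

lemma ite_sum_zero {c : Prop} [Decidable c] {ι : Type*} [Fintype ι] (f : ι → ℝ) :
    (if c then ∑ i, f i else 0) = ∑ i, if c then f i else 0 := by
  split <;> simp

lemma sum_ite_pull {α ι : Type*} [Fintype α] [Fintype ι] (c : α → Prop) [DecidablePred c]
    (f : α → ι → ℝ) :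
    ∑ x, (if c x then ∑ i, f x i else 0) = ∑ i, ∑ x, if c x then f x i else 0 := by
  rw [Finset.sum_comm]
  exact Finset.sum_congr rfl fun x _ => ite_sum_zero _

lemma probOf_comp [Fintype α] (X : Ω → α) (h : α → γ) (z : γ) :
    probOf μ (fun ω => h (X ω)) z = ∑ x, if h x = z then probOf μ X x else 0 := by
  classical
  simp only [probOf_eq]
  rw [sum_ite_pull]
  refine Finset.sum_congr rfl fun ω _ => ?_
  rw [Finset.sum_eq_single (X ω)]
  · simp
  · intro b _ hb
    simp [Ne.symm hb]
  · simp

lemma probOf_fst_marg [Fintype α] [Fintype β] (X : Ω → α) (Y : Ω → β) (y : β) :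
    probOf μ Y y = ∑ x, probOf μ (fun ω => (X ω, Y ω)) (x, y) := by
  classical
  simp only [probOf_eq]
  rw [Finset.sum_comm]
  refine Finset.sum_congr rfl fun ω _ => ?_
  rw [Finset.sum_eq_single (X ω)]
  · simp
  · intro b _ hb
    simp [Prod.ext_iff, Ne.symm hb]
  · simp

lemma probOf_pair_comp [Fintype α] [Fintype β] (X : Ω → α) (Y : Ω → β) (g : β → γ)
    (x : α) (w : γ) :
    probOf μ (fun ω => (X ω, g (Y ω))) (x, w) =
      ∑ y, if g y = w then probOf μ (fun ω => (X ω, Y ω)) (x, y) else 0 := by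
  classical
  simp only [probOf_eq]
  rw [sum_ite_pull]
  refine Finset.sum_congr rfl fun ω _ => ?_
  rw [Finset.sum_eq_single (Y ω)]
  · by_cases h1 : X ω = x <;> by_cases h2 : g (Y ω) = w <;>
      simp [Prod.ext_iff, h1, h2]
  · intro b _ hb
    simp [Prod.ext_iff, Ne.symm hb]
  · simp

end Basics

section Analytic

lemma sum_log_sum_ineq {ι : Type*} (s : Finset ι) (a b : ι → ℝ)
    (h : ∀ i ∈ s, 0 ≤ a i ∧ a i ≤ b i) :
    ∑ i ∈ s, a i * (Real.log (b i) - Real.log (a i)) ≤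
      (∑ i ∈ s, a i) * (Real.log (∑ i ∈ s, b i) - Real.log (∑ i ∈ s, a i)) := by
  set A := ∑ i ∈ s, a i with hA
  set B := ∑ i ∈ s, b i with hB
  have ha0 : ∀ i ∈ s, 0 ≤ a i := fun i hi => (h i hi).1
  have hb0 : ∀ i ∈ s, 0 ≤ b i := fun i hi => le_trans (h i hi).1 (h i hi).2
  have hA0 : 0 ≤ A := Finset.sum_nonneg ha0
  rcases eq_or_lt_of_le hA0 with hA0' | hA0'
  · have hz : ∀ i ∈ s, a i = 0 := (Finset.sum_eq_zero_iff_of_nonneg ha0).mp hA0'.symm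
    have hL : ∑ i ∈ s, a i * (Real.log (b i) - Real.log (a i)) = 0 := by
      apply Finset.sum_eq_zero
      intro i hi
      rw [hz i hi]; ring
    rw [hL, ← hA0']; simp
  · have hAB : A ≤ B := Finset.sum_le_sum fun i hi => (h i hi).2
    have hB0 : 0 < B := lt_of_lt_of_le hA0' hAB
    have key : ∀ i ∈ s, a i * (Real.log (b i) - Real.log (a i)) ≤
        (b i * (A / B) - a i) + a i * (Real.log B - Real.log A) := by
      intro i hi
      rcases eq_or_lt_of_le (ha0 i hi) with hai | hai
      · rw [← hai]
        have : 0 ≤ b i * (A / B) := mul_nonneg (hb0 i hi) (by positivity)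
        simpa using this
      · have hbi : 0 < b i := lt_of_lt_of_le hai (h i hi).2
        have hlog : Real.log (b i * A / (a i * B)) ≤ b i * A / (a i * B) - 1 :=
          Real.log_le_sub_one_of_pos (by positivity)
        have hsplit : Real.log (b i * A / (a i * B)) =
            Real.log (b i) - Real.log (a i) - (Real.log B - Real.log A) := by
          rw [Real.log_div (by positivity) (by positivity),
            Real.log_mul hbi.ne' hA0'.ne', Real.log_mul hai.ne' hB0.ne']
          ring
        have hmul := mul_le_mul_of_nonneg_left hlog hai.le
        have hfe : a i * (b i * A / (a i * B) - 1) = b i * (A / B) - a i := by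
          field_simp
        rw [hfe] at hmul
        rw [hsplit] at hmul
        nlinarith [hmul]
    calc ∑ i ∈ s, a i * (Real.log (b i) - Real.log (a i))
        ≤ ∑ i ∈ s, ((b i * (A / B) - a i) + a i * (Real.log B - Real.log A)) :=
          Finset.sum_le_sum key
      _ = B * (A / B) - A + A * (Real.log B - Real.log A) := by
          rw [Finset.sum_add_distrib, Finset.sum_sub_distrib, ← Finset.sum_mul,
            ← Finset.sum_mul]
      _ = A * (Real.log B - Real.log A) := by
          field_simp
          ring
  
lemma negMulLog_sum_le {ι : Type*} (s : Finset ι) (a : ι → ℝ) (ha : ∀ i ∈ s, 0 ≤ a i) :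
    Real.negMulLog (∑ i ∈ s, a i) ≤ ∑ i ∈ s, Real.negMulLog (a i) := by
  set A := ∑ i ∈ s, a i with hA
  have hA0 : 0 ≤ A := Finset.sum_nonneg ha
  have key : ∀ i ∈ s, a i * Real.log (a i) ≤ a i * Real.log A := by
    intro i hi
    rcases eq_or_lt_of_le (ha i hi) with hai | hai
    · rw [← hai]; ring_nf; exact le_refl _
    · exact mul_le_mul_of_nonneg_left
        (Real.log_le_log hai (Finset.single_le_sum ha hi)) hai.le
  have h1 : ∑ i ∈ s, a i * Real.log (a i) ≤ A * Real.log A := by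
    calc ∑ i ∈ s, a i * Real.log (a i) ≤ ∑ i ∈ s, a i * Real.log A :=
          Finset.sum_le_sum key
      _ = A * Real.log A := by rw [← Finset.sum_mul]
  simp only [Real.negMulLog, neg_mul]
  have : ∑ x ∈ s, -(a x * Real.log (a x)) = -∑ x ∈ s, a x * Real.log (a x) := by
    rw [Finset.sum_neg_distrib]
  rw [this]
  exact neg_le_neg h1

end Analytic

section Entropy

variable {Ω α β γ : Type*} [Fintype Ω] [Fintype α] [Fintype β] [Fintype γ]

def entNat {α : Type*} [Fintype α] (p : α → ℝ) : ℝ := ∑ x, Real.negMulLog (p x)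

lemma log2_pos : (0:ℝ) < Real.log 2 := Real.log_pos one_lt_two

lemma ent_eq (μ : Ω → ℝ) (X : Ω → α) : ent μ X = entNat (probOf μ X) / Real.log 2 := by
  unfold ent entNat
  rw [Finset.sum_div, ← Finset.sum_neg_distrib]
  exact Finset.sum_congr rfl fun x _ => by simp only [Real.logb, Real.negMulLog]; ring

lemma ent_comp_inj (μ : Ω → ℝ) (X : Ω → α) (g : α → γ) (hg : Function.Injective g) :
    ent μ (fun ω => g (X ω)) = ent μ X := by
  classical
  unfold ent
  have h1 : ∀ z ∈ Finset.univ, z ∉ Finset.univ.image g →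
      probOf μ (fun ω => g (X ω)) z * Real.logb 2 (probOf μ (fun ω => g (X ω)) z) = 0 := by
    intro z _ hz
    have : probOf μ (fun ω => g (X ω)) z = 0 := by
      rw [probOf_comp]
      apply Finset.sum_eq_zero
      intro x _
      rw [if_neg]
      intro he
      exact hz (Finset.mem_image.mpr ⟨x, Finset.mem_univ x, he⟩)
    rw [this]; ring
  have h2 : ∀ x, probOf μ (fun ω => g (X ω)) (g x) = probOf μ X x := by
    intro x
    rw [probOf_comp]
    rw [Finset.sum_eq_single x]
    · simp
    · intro b _ hb
      rw [if_neg (fun he => hb (hg he))]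
    · simp
  rw [← Finset.sum_subset (Finset.subset_univ (Finset.univ.image g)) h1]
  rw [Finset.sum_image (fun x _ y _ h => hg h)]
  simp only [h2]

lemma ent_pair_assoc (μ : Ω → ℝ) (X : Ω → α) (Y : Ω → β) (W : Ω → γ) :
    ent μ (fun ω => ((X ω, Y ω), W ω)) = ent μ (fun ω => (X ω, (Y ω, W ω))) := by
  have := ent_comp_inj μ (fun ω => ((X ω, Y ω), W ω)) (Equiv.prodAssoc α β γ)
    (Equiv.prodAssoc α β γ).injective
  exact this.symm

lemma condEnt_chain (μ : Ω → ℝ) (X : Ω → α) (Y : Ω → β) (W : Ω → γ) :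
    condEnt μ (fun ω => (X ω, Y ω)) W =
      condEnt μ X (fun ω => (Y ω, W ω)) + condEnt μ Y W := by
  unfold condEnt
  rw [ent_pair_assoc]
  ring

lemma condEnt_comp_inj_left (μ : Ω → ℝ) (X : Ω → α) (W : Ω → γ) (g : α → β)
    (hg : Function.Injective g) :
    condEnt μ (fun ω => g (X ω)) W = condEnt μ X W := by
  unfold condEnt
  have := ent_comp_inj μ (fun ω => (X ω, W ω)) (Prod.map g id)
    (hg.prodMap Function.injective_id)
  rw [show (fun ω => (g (X ω), W ω)) = (fun ω => Prod.map g id (X ω, W ω)) from rfl, this]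

end Entropy

section Entropy2

variable {Ω α β γ : Type*} [Fintype Ω] [Fintype α] [Fintype β] [Fintype γ]

lemma entNat_pair_sub (p : α × β → ℝ) (q : β → ℝ) (hq : ∀ y, q y = ∑ x, p (x, y)) :
    entNat p - entNat q =
      ∑ y, ∑ x, p (x, y) * (Real.log (q y) - Real.log (p (x, y))) := by
  unfold entNat
  rw [Fintype.sum_prod_type, Finset.sum_comm, ← Finset.sum_sub_distrib]
  refine Finset.sum_congr rfl fun y _ => ?_
  have h1 : Real.negMulLog (q y) = ∑ x, -(p (x, y) * Real.log (q y)) := by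
    rw [Finset.sum_neg_distrib, Real.negMulLog, hq y, ← Finset.sum_mul]
    ring
  rw [h1, ← Finset.sum_sub_distrib]
  exact Finset.sum_congr rfl fun x _ => by simp only [Real.negMulLog]; ring

lemma entNat_marg_le (p : α × β → ℝ) (hp : ∀ z, 0 ≤ p z) (q : β → ℝ)
    (hq : ∀ y, q y = ∑ x, p (x, y)) : entNat q ≤ entNat p := by
  unfold entNat
  rw [Fintype.sum_prod_type, Finset.sum_comm]
  refine Finset.sum_le_sum fun y _ => ?_
  rw [hq y]
  exact negMulLog_sum_le _ _ fun x _ => hp _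

lemma condEnt_nonneg (μ : Ω → ℝ) (hμ : IsPMF μ) (X : Ω → α) (Y : Ω → β) :
    0 ≤ condEnt μ X Y := by
  rw [condEnt, ent_eq, ent_eq, div_sub_div_same]
  apply div_nonneg _ log2_pos.le
  rw [sub_nonneg]
  exact entNat_marg_le _ (fun z => probOf_nonneg μ hμ.1 _ z) _
    (fun y => probOf_fst_marg μ X Y y)

lemma ent_le_logCard (μ : Ω → ℝ) (hμ : IsPMF μ) (X : Ω → α) :
    ent μ X ≤ Real.logb 2 (Fintype.card α) := by
  rw [ent_eq, Real.logb]
  apply div_le_div_of_nonneg_right _ log2_pos.le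
  have hp0 : ∀ x, 0 ≤ probOf μ X x := probOf_nonneg μ hμ.1 X
  have hp1 : ∑ x, probOf μ X x = 1 := sum_probOf μ hμ X
  have hle1 : ∀ x, probOf μ X x ≤ 1 := fun x => by
    rw [← hp1]
    exact Finset.single_le_sum (fun i _ => hp0 i) (Finset.mem_univ x)
  calc entNat (probOf μ X)
      = ∑ x, probOf μ X x * (Real.log 1 - Real.log (probOf μ X x)) := by
        unfold entNat
        exact Finset.sum_congr rfl fun x _ => by
          simp only [Real.negMulLog, Real.log_one]; ring
    _ ≤ (∑ x, probOf μ X x) *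
        (Real.log (∑ _x : α, (1:ℝ)) - Real.log (∑ x, probOf μ X x)) :=
        sum_log_sum_ineq Finset.univ _ (fun _ => (1:ℝ)) (fun x _ => ⟨hp0 x, hle1 x⟩)
    _ = Real.log (Fintype.card α) := by
        rw [hp1]
        simp

lemma condEnt_comp_right_le (μ : Ω → ℝ) (hμ : IsPMF μ) (X : Ω → α) (Y : Ω → β)
    (g : β → γ) : condEnt μ X Y ≤ condEnt μ X (fun ω => g (Y ω)) := by
  classical
  set r : α × β → ℝ := probOf μ (fun ω => (X ω, Y ω)) with hr
  set rY : β → ℝ := probOf μ Y with hrY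
  set r' : α × γ → ℝ := probOf μ (fun ω => (X ω, g (Y ω))) with hr'
  set rW : γ → ℝ := probOf μ (fun ω => g (Y ω)) with hrW
  have hr0 : ∀ z, 0 ≤ r z := probOf_nonneg μ hμ.1 _
  have hmargY : ∀ y, rY y = ∑ x, r (x, y) := fun y => probOf_fst_marg μ X Y y
  have hr'e : ∀ x w, r' (x, w) = ∑ y, if g y = w then r (x, y) else 0 := fun x w =>
    probOf_pair_comp μ X Y g x w
  have hrWe : ∀ w, rW w = ∑ y, if g y = w then rY y else 0 := fun w => probOf_comp μ Y g w
  have hdom : ∀ x y, r (x, y) ≤ rY y := by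
    intro x y
    rw [hmargY y]
    exact Finset.single_le_sum (fun i _ => hr0 (i, y)) (Finset.mem_univ x)
  have hmargW : ∀ w, rW w = ∑ x, r' (x, w) := by
    intro w
    rw [hrWe w]
    have h1 : ∀ y, (if g y = w then rY y else 0) = ∑ x, if g y = w then r (x, y) else 0 := by
      intro y
      rw [hmargY y]
      exact ite_sum_zero _
    rw [Finset.sum_congr rfl fun y _ => h1 y, Finset.sum_comm]
    exact Finset.sum_congr rfl fun x _ => (hr'e x w).symm
  rw [condEnt, condEnt, ent_eq, ent_eq, ent_eq, ent_eq, div_sub_div_same, div_sub_div_same]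
  apply div_le_div_of_nonneg_right _ log2_pos.le
  rw [entNat_pair_sub _ _ hmargY, entNat_pair_sub _ _ hmargW]
  calc ∑ y, ∑ x, r (x, y) * (Real.log (rY y) - Real.log (r (x, y)))
      = ∑ x, ∑ y, r (x, y) * (Real.log (rY y) - Real.log (r (x, y))) := Finset.sum_comm
    _ = ∑ x, ∑ w, ∑ y ∈ Finset.univ.filter (fun y => g y = w),
          r (x, y) * (Real.log (rY y) - Real.log (r (x, y))) :=
        Finset.sum_congr rfl fun x _ => (Finset.sum_fiberwise Finset.univ g _).symm
    _ ≤ ∑ x, ∑ w, r' (x, w) * (Real.log (rW w) - Real.log (r' (x, w))) := by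
        refine Finset.sum_le_sum fun x _ => Finset.sum_le_sum fun w _ => ?_
        have hfil1 : r' (x, w) = ∑ y ∈ Finset.univ.filter (fun y => g y = w), r (x, y) := by
          rw [hr'e x w, ← Finset.sum_filter]
        have hfil2 : rW w = ∑ y ∈ Finset.univ.filter (fun y => g y = w), rY y := by
          rw [hrWe w, ← Finset.sum_filter]
        rw [hfil1, hfil2]
        exact sum_log_sum_ineq _ _ _ (fun y _ => ⟨hr0 _, hdom x y⟩)
    _ = ∑ w, ∑ x, r' (x, w) * (Real.log (rW w) - Real.log (r' (x, w))) := Finset.sum_comm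

end Entropy2

section Chain

variable {Ω' σ τ : Type*} [Fintype Ω'] [Fintype σ] [Fintype τ]

lemma chain_lower (ν : Ω' → ℝ) (hν : IsPMF ν) {n : ℕ} (A : Ω' → Fin n → ZMod 2)
    (S : Ω' → σ) (W : Ω' → τ) (f : σ → τ) (hW : ∀ ω, W ω = f (S ω))
    (F : Finset (Fin n)) :
    ∑ j ∈ F, condEnt ν (fun ω => A ω j)
        (fun ω => ((fun i : Fin j.1 => A ω (Fin.castLE j.2.le i)), S ω)) ≤
      condEnt ν (fun ω => restr F (A ω)) W := by
  classical
  induction F using Finset.induction_on_max with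
  | empty => simpa using condEnt_nonneg ν hν (fun ω => restr (∅ : Finset (Fin n)) (A ω)) W
  | insert a F hlt ih =>
    have ha : a ∉ F := fun h => lt_irrefl a (hlt a h)
    rw [Finset.sum_insert ha]
    have he_inj : Function.Injective
        (fun (v : {j // j ∈ insert a F} → ZMod 2) =>
          (v ⟨a, Finset.mem_insert_self a F⟩,
           fun j : {j // j ∈ F} => v ⟨j.1, Finset.mem_insert_of_mem j.2⟩)) := by
      intro v1 v2 h
      funext j
      rcases Finset.mem_insert.mp j.2 with h1 | h1
      · have hj : j = ⟨a, Finset.mem_insert_self a F⟩ := Subtype.ext h1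
        rw [hj]
        exact congrArg Prod.fst h
      · have h2 := congrArg (fun p => p.2 ⟨j.1, h1⟩) h
        simp only at h2
        rw [show j = ⟨j.1, Finset.mem_insert_of_mem h1⟩ from Subtype.ext rfl]
        exact h2
    have h1 : condEnt ν (fun ω => (A ω a, restr F (A ω))) W
        = condEnt ν (fun ω => restr (insert a F) (A ω)) W :=
      condEnt_comp_inj_left ν (fun ω => restr (insert a F) (A ω)) W
        (fun (v : {j // j ∈ insert a F} → ZMod 2) =>
          (v ⟨a, Finset.mem_insert_self a F⟩,
           fun j : {j // j ∈ F} => v ⟨j.1, Finset.mem_insert_of_mem j.2⟩)) he_inj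
    have hstep : condEnt ν (fun ω => A ω a)
        (fun ω => ((fun i : Fin a.1 => A ω (Fin.castLE a.2.le i)), S ω)) ≤
        condEnt ν (fun ω => A ω a) (fun ω => (restr F (A ω), W ω)) := by
      have hcomp := condEnt_comp_right_le ν hν (fun ω => A ω a)
        (fun ω => ((fun i : Fin a.1 => A ω (Fin.castLE a.2.le i)), S ω))
        (fun ps : (Fin a.1 → ZMod 2) × σ =>
          ((fun j : {j // j ∈ F} => ps.1 ⟨j.1.1, Fin.lt_def.mp (hlt j.1 j.2)⟩), f ps.2))
      refine le_of_le_of_eq hcomp (congrArg (condEnt ν (fun ω => A ω a)) ?_)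
      funext ω
      rw [hW ω]
      refine Prod.ext ?_ rfl
      funext j
      show A ω (Fin.castLE a.2.le ⟨j.1.1, Fin.lt_def.mp (hlt j.1 j.2)⟩) = restr F (A ω) j
      have : Fin.castLE a.2.le ⟨j.1.1, Fin.lt_def.mp (hlt j.1 j.2)⟩ = j.1 := by
        apply Fin.ext
        rfl
      rw [this]
      rfl
    calc condEnt ν (fun ω => A ω a)
          (fun ω => ((fun i : Fin a.1 => A ω (Fin.castLE a.2.le i)), S ω)) +
          ∑ j ∈ F, condEnt ν (fun ω => A ω j)
            (fun ω => ((fun i : Fin j.1 => A ω (Fin.castLE j.2.le i)), S ω))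
        ≤ condEnt ν (fun ω => A ω a) (fun ω => (restr F (A ω), W ω)) +
            condEnt ν (fun ω => restr F (A ω)) W := add_le_add hstep ih
      _ = condEnt ν (fun ω => (A ω a, restr F (A ω))) W :=
          (condEnt_chain ν (fun ω => A ω a) (fun ω => restr F (A ω)) W).symm
      _ = condEnt ν (fun ω => restr (insert a F) (A ω)) W := h1

end Chain

-- helper lemmas for the final assembly


lemma iid_isPMF {Ω : Type*} [Fintype Ω] {μ : Ω → ℝ} (hμ : IsPMF μ) (n : ℕ) :
    IsPMF (iid μ n) := by
  constructor
  · intro ω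
    exact Finset.prod_nonneg fun i _ => hμ.1 _
  · classical
    unfold iid
    rw [← Fintype.piFinset_univ, ← Finset.prod_univ_sum]
    simp [hμ.2]

lemma mutInfo_eq_ent_sub_condEnt {Ω α β : Type*} [Fintype Ω] [Fintype α] [Fintype β]
    (μ : Ω → ℝ) (X : Ω → α) (Y : Ω → β) :
    mutInfo μ X Y = ent μ X - condEnt μ X Y := by
  unfold mutInfo condEnt
  ring

set_option maxHeartbeats 3000000

/-- **Per-block strong secrecy, conditional form (Lemma 2 skeleton).**
If a tuple `(Ã^n, T̃_{(1)}^n, T̃_{(2)}^n, Z̃^n)` with law `q̃` satisfies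
`H_q̃(Ã[ℱ], T̃_{(k)}[𝒢], T̃_{(k̄)}[ℬ] | Z̃^n) ≥ H_p(A[ℱ], T_{(k)}[𝒢], T_{(k̄)}[ℬ] | Z^n) − ε`
(the right-hand side computed under the true i.i.d. law `p`), then
`I_q̃(Ã[ℱ], T̃_{(k)}[𝒢], T̃_{(k̄)}[ℬ] ; Z̃^n) ≤ 3 n δ_n + ε`.
Here `Ua` plays the role of `U_k` and `Ub` that of `U_k̄`. -/
theorem per_block_strong_secrecy_conditional
    {Ω 𝒵 : Type*} [Fintype Ω] [Fintype 𝒵]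
    (μ : Ω → ℝ) (hμ : IsPMF μ)
    (V Ua Ub : Ω → ZMod 2) (Z : Ω → 𝒵)
    (β : ℝ) (hβ0 : 0 < β) (hβ1 : β < 1 / 2) (m : ℕ)
    (q : (Fin (2 ^ m) → ZMod 2) × (Fin (2 ^ m) → ZMod 2) × (Fin (2 ^ m) → ZMod 2) ×
      (Fin (2 ^ m) → 𝒵) → ℝ)
    (hq : IsPMF q) (ε : ℝ) (hε : 0 ≤ ε)
    (hH : condEnt (iid μ (2 ^ m))
        (fun ω => secTriple μ V Ua Ub Z β m
          (polarVec V m ω) (polarVec Ua m ω) (polarVec Ub m ω))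
        (fun ω => fun i => Z (ω i)) - ε ≤
      condEnt q
        (fun s => secTriple μ V Ua Ub Z β m s.1 s.2.1 s.2.2.1)
        (fun s => s.2.2.2)) :
    mutInfo q (fun s => secTriple μ V Ua Ub Z β m s.1 s.2.1 s.2.2.1)
        (fun s => s.2.2.2) ≤
      3 * ((2 : ℕ) ^ m : ℝ) * deltaN β (2 ^ m) + ε := by
  classical
  set δ := deltaN β (2 ^ m) with hδ
  set ν := iid μ (2 ^ m) with hν'
  have hν : IsPMF ν := iid_isPMF hμ (2 ^ m)
  set F := highSet μ V Z β m with hF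
  set G := highSet μ Ua (fun ω => (V ω, Z ω)) β m with hG
  set B := highSet μ Ub (fun ω => (V ω, Ua ω, Z ω)) β m with hB
  set XA : (Fin (2 ^ m) → Ω) → ({j // j ∈ F} → ZMod 2) :=
    fun ω => restr F (polarVec V m ω) with hXA
  set XG : (Fin (2 ^ m) → Ω) → ({j // j ∈ G} → ZMod 2) :=
    fun ω => restr G (polarVec Ua m ω) with hXG
  set XB : (Fin (2 ^ m) → Ω) → ({j // j ∈ B} → ZMod 2) :=
    fun ω => restr B (polarVec Ub m ω) with hXB
  set Zn : (Fin (2 ^ m) → Ω) → (Fin (2 ^ m) → 𝒵) := fun ω => fun i => Z (ω i) with hZn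
  have hδ0 : 0 ≤ δ := Real.rpow_nonneg (by norm_num) _
  have hsec : (fun ω => secTriple μ V Ua Ub Z β m
      (polarVec V m ω) (polarVec Ua m ω) (polarVec Ub m ω)) =
      (fun ω => (XA ω, (XG ω, XB ω))) := rfl
  rw [hsec] at hH
  -- the three per-index sums
  have hFsum : (F.card : ℝ) * (1 - δ) ≤
      ∑ j ∈ F, condEnt ν (fun ω => polarVec V m ω j)
        (fun ω => ((fun i : Fin j.1 => polarVec V m ω (Fin.castLE j.2.le i)),
          (fun i => Z (ω i)))) := by
    rw [show ((F.card : ℝ) * (1 - δ)) = ∑ _j ∈ F, (1 - δ) by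
      rw [Finset.sum_const, nsmul_eq_mul]]
    refine Finset.sum_le_sum fun j hj => ?_
    have hj' : 1 - δ ≤ condEnt ν (fun ω => polarVec V m ω j)
        (fun ω => (prefixVec V m j ω, fun i => Z (ω i))) := by
      rw [hF] at hj
      unfold highSet cfilter at hj
      exact (Finset.mem_filter.mp hj).2
    exact hj'
  have hGsum : (G.card : ℝ) * (1 - δ) ≤
      ∑ j ∈ G, condEnt ν (fun ω => polarVec Ua m ω j)
        (fun ω => ((fun i : Fin j.1 => polarVec Ua m ω (Fin.castLE j.2.le i)),
          (fun i => (V (ω i), Z (ω i))))) := by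
    rw [show ((G.card : ℝ) * (1 - δ)) = ∑ _j ∈ G, (1 - δ) by
      rw [Finset.sum_const, nsmul_eq_mul]]
    refine Finset.sum_le_sum fun j hj => ?_
    have hj' : 1 - δ ≤ condEnt ν (fun ω => polarVec Ua m ω j)
        (fun ω => (prefixVec Ua m j ω, fun i => (V (ω i), Z (ω i)))) := by
      rw [hG] at hj
      unfold highSet cfilter at hj
      exact (Finset.mem_filter.mp hj).2
    exact hj'
  have hBsum : (B.card : ℝ) * (1 - δ) ≤
      ∑ j ∈ B, condEnt ν (fun ω => polarVec Ub m ω j)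
        (fun ω => ((fun i : Fin j.1 => polarVec Ub m ω (Fin.castLE j.2.le i)),
          (fun i => (V (ω i), Ua (ω i), Z (ω i))))) := by
    rw [show ((B.card : ℝ) * (1 - δ)) = ∑ _j ∈ B, (1 - δ) by
      rw [Finset.sum_const, nsmul_eq_mul]]
    refine Finset.sum_le_sum fun j hj => ?_
    have hj' : 1 - δ ≤ condEnt ν (fun ω => polarVec Ub m ω j)
        (fun ω => (prefixVec Ub m j ω, fun i => (V (ω i), Ua (ω i), Z (ω i)))) := by
      rw [hB] at hj
      unfold highSet cfilter at hj
      exact (Finset.mem_filter.mp hj).2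
    exact hj'
  -- chain_lower for the three blocks
  have tA : ∑ j ∈ F, condEnt ν (fun ω => polarVec V m ω j)
        (fun ω => ((fun i : Fin j.1 => polarVec V m ω (Fin.castLE j.2.le i)),
          (fun i => Z (ω i)))) ≤ condEnt ν XA Zn :=
    chain_lower ν hν (fun ω => polarVec V m ω) (fun ω => fun i => Z (ω i)) Zn id
      (fun ω => rfl) F
  have tG : ∑ j ∈ G, condEnt ν (fun ω => polarVec Ua m ω j)
        (fun ω => ((fun i : Fin j.1 => polarVec Ua m ω (Fin.castLE j.2.le i)),
          (fun i => (V (ω i), Z (ω i))))) ≤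
        condEnt ν XG (fun ω => (XA ω, Zn ω)) :=
    chain_lower ν hν (fun ω => polarVec Ua m ω) (fun ω => fun i => (V (ω i), Z (ω i)))
      (fun ω => (XA ω, Zn ω))
      (fun s => (restr F (Matrix.vecMul (fun i => (s i).1) (polarG m)),
        fun i => (s i).2))
      (fun ω => rfl) G
  have tB : ∑ j ∈ B, condEnt ν (fun ω => polarVec Ub m ω j)
        (fun ω => ((fun i : Fin j.1 => polarVec Ub m ω (Fin.castLE j.2.le i)),
          (fun i => (V (ω i), Ua (ω i), Z (ω i))))) ≤
        condEnt ν XB (fun ω => ((XG ω, XA ω), Zn ω)) :=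
    chain_lower ν hν (fun ω => polarVec Ub m ω)
      (fun ω => fun i => (V (ω i), Ua (ω i), Z (ω i)))
      (fun ω => ((XG ω, XA ω), Zn ω))
      (fun s => ((restr G (Matrix.vecMul (fun i => (s i).2.1) (polarG m)),
        restr F (Matrix.vecMul (fun i => (s i).1) (polarG m))),
        fun i => (s i).2.2))
      (fun ω => rfl) B
  -- reorder the triple
  have hginj : Function.Injective
      (fun t : ({j // j ∈ F} → ZMod 2) × ({j // j ∈ G} → ZMod 2) × ({j // j ∈ B} → ZMod 2) =>
        (t.2.2, (t.2.1, t.1))) := by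
    rintro ⟨a1, g1, b1⟩ ⟨a2, g2, b2⟩ h
    simp only [Prod.mk.injEq] at h
    simp [Prod.ext_iff, h.1, h.2.1, h.2.2]
  have h1 : condEnt ν (fun ω => (XB ω, (XG ω, XA ω))) Zn =
      condEnt ν (fun ω => (XA ω, (XG ω, XB ω))) Zn :=
    condEnt_comp_inj_left ν (fun ω => (XA ω, (XG ω, XB ω))) Zn
      (fun t => (t.2.2, (t.2.1, t.1))) hginj
  have h2 : condEnt ν (fun ω => (XB ω, (XG ω, XA ω))) Zn =
      condEnt ν XB (fun ω => ((XG ω, XA ω), Zn ω)) +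
        condEnt ν (fun ω => (XG ω, XA ω)) Zn :=
    condEnt_chain ν XB (fun ω => (XG ω, XA ω)) Zn
  have h3 : condEnt ν (fun ω => (XG ω, XA ω)) Zn =
      condEnt ν XG (fun ω => (XA ω, Zn ω)) + condEnt ν XA Zn :=
    condEnt_chain ν XG XA Zn
  -- lower bound on the true conditional entropy
  have hHp : ((F.card + G.card + B.card : ℕ) : ℝ) * (1 - δ) ≤
      condEnt ν (fun ω => (XA ω, (XG ω, XB ω))) Zn := by
    rw [← h1, h2, h3]
    push_cast
    have := add_le_add (le_trans hBsum tB) (add_le_add (le_trans hGsum tG) (le_trans hFsum tA))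
    nlinarith [this]
  -- the observed conditional entropy is at least Hp - ε
  have hHq : ((F.card + G.card + B.card : ℕ) : ℝ) * (1 - δ) - ε ≤
      condEnt q (fun s => secTriple μ V Ua Ub Z β m s.1 s.2.1 s.2.2.1)
        (fun s => s.2.2.2) := by
    refine le_trans (by linarith [hHp]) hH
  -- entropy upper bound
  have hcard : (Fintype.card (({j // j ∈ F} → ZMod 2) × ({j // j ∈ G} → ZMod 2) ×
      ({j // j ∈ B} → ZMod 2)) : ℝ) = 2 ^ (F.card + G.card + B.card) := by
    rw [Fintype.card_prod, Fintype.card_prod, Fintype.card_fun, Fintype.card_fun,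
      Fintype.card_fun]
    have h2c : Fintype.card (ZMod 2) = 2 := rfl
    rw [h2c, Fintype.card_coe, Fintype.card_coe, Fintype.card_coe]
    push_cast
    rw [pow_add, pow_add]
    ring
  have hent : ent q (fun s => secTriple μ V Ua Ub Z β m s.1 s.2.1 s.2.2.1) ≤
      ((F.card + G.card + B.card : ℕ) : ℝ) := by
    refine le_trans (ent_le_logCard q hq _) ?_
    rw [hcard, show ((2 : ℝ) ^ (F.card + G.card + B.card)) =
        (2 : ℝ) ^ ((F.card + G.card + B.card : ℕ)) from rfl]
    rw [Real.logb_pow]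
    rw [Real.logb_self_eq_one (by norm_num)]
    push_cast
    ring_nf
    exact le_refl _
  -- cardinality bound
  have hcardle : ((F.card + G.card + B.card : ℕ) : ℝ) ≤ 3 * ((2:ℕ) ^ m : ℝ) := by
    have hf : F.card ≤ 2 ^ m := by
      simpa using (Finset.card_le_univ F).trans_eq (by simp)
    have hg : G.card ≤ 2 ^ m := by
      simpa using (Finset.card_le_univ G).trans_eq (by simp)
    have hb : B.card ≤ 2 ^ m := by
      simpa using (Finset.card_le_univ B).trans_eq (by simp)
    push_cast
    have : (F.card : ℝ) ≤ 2 ^ m := by exact_mod_cast hf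
    have : (G.card : ℝ) ≤ 2 ^ m := by exact_mod_cast hg
    have : (B.card : ℝ) ≤ 2 ^ m := by exact_mod_cast hb
    push_cast at *
    linarith
  -- assemble
  rw [mutInfo_eq_ent_sub_condEnt]
  set N : ℝ := ((F.card + G.card + B.card : ℕ) : ℝ) with hN
  have hN0 : 0 ≤ N := by positivity
  have hfinal : N * δ ≤ 3 * ((2:ℕ) ^ m : ℝ) * δ :=
    mul_le_mul_of_nonneg_right hcardle hδ0
  nlinarith [hent, hHq, hfinal]


end WTpaper
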